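/- Let L : Cat → Grpd be the groupoidification functor (localisation at all morphisms), left adjoint to the inclusion I : Grpd → Cat. Then for any category C and groupoid G, there is a natural equivalence L(C × I(G)) ≃ L(C) × G. -/

import Mathlib

open CategoryTheory

universe u

noncomputable instance functorGroupoidAux {C : Type*} {D : Type*} [Category C] [Groupoid D] :
    Groupoid (C ⥤ D) :=
  Groupoid.ofIsIso fun f => NatIso.isIso_of_isIso_app f

theorem comp_uncurry_aux {A B E X : Type u} [Category.{u} A] [Category.{u} B] [Category.{u} E]
    [Category.{u} X] (Y : X ⥤ A) (K : A ⥤ (B ⥤ E)) :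
    (Y.prod (𝟭 B)) ⋙ Functor.uncurry.obj K = Functor.uncurry.obj (Y ⋙ K) :=
  CategoryTheory.Functor.ext (fun _ => rfl) (fun ⟨x₁, x₂⟩ ⟨y₁, y₂⟩ ⟨f₁, f₂⟩ => by
    dsimp [Functor.uncurry]; simp)

theorem comp_curry_aux {A B E X : Type u} [Category.{u} A] [Category.{u} B] [Category.{u} E]
    [Category.{u} X] (Y : X ⥤ A) (K : A × B ⥤ E) :
    Y ⋙ Functor.curry.obj K = Functor.curry.obj ((Y.prod (𝟭 B)) ⋙ K) :=
  CategoryTheory.Functor.ext (fun _ => CategoryTheory.Functor.ext (fun _ => rfl)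
    (fun _ _ _ => by simp [Functor.curryObj])) (by aesop_cat)

/-- Let `L : Cat → Grpd` be groupoidification, i.e. any left adjoint to the
inclusion `I : Grpd → Cat`.  Then for any category `C` and any groupoid `G`
there is an equivalence `L(C × I(G)) ≃ L(C) × G`. -/
theorem groupoidification_preserves_product_with_groupoid
    (L : Cat.{u, u} ⥤ Grpd.{u, u}) (adj : L ⊣ Grpd.forgetToCat)
    (C : Cat.{u, u}) (G : Grpd.{u, u}) :
    Nonempty
      ((↑(L.obj (Cat.of (↑C × ↑(Grpd.forgetToCat.obj G)))) : Type u) ≌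
        (↑(L.obj C) × ↑G)) := by
  let P : Cat.{u, u} := Cat.of (↑C × ↑(Grpd.forgetToCat.obj G))
  let D : Grpd.{u, u} := Grpd.of (↑(L.obj C) × ↑G)
  -- the comparison functor upstairs
  let u : P ⟶ Grpd.forgetToCat.obj D :=
    Functor.toCatHom (Functor.prod ((adj.unit.app C).toFunctor : ↑C ⥤ ↑(L.obj C)) (𝟭 (↑G : Type u)))
  let F : L.obj P ⟶ D := (adj.homEquiv P D).symm u
  have hF : adj.unit.app P ≫ Grpd.forgetToCat.map F = u := by
    have h := (adj.homEquiv P D).apply_symm_apply u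
    rwa [Adjunction.homEquiv_unit] at h
  -- the inverse, via currying
  let E : Grpd.{u, u} := Grpd.of ((↑G : Type u) ⥤ (↑(L.obj P) : Type u))
  let cη : C ⟶ Grpd.forgetToCat.obj E :=
    Functor.toCatHom (Functor.curry.obj ((adj.unit.app P).toFunctor : (↑C × (↑G : Type u)) ⥤ ↑(L.obj P)))
  let B' : L.obj C ⟶ E := (adj.homEquiv C E).symm cη
  have hB' : adj.unit.app C ≫ Grpd.forgetToCat.map B' = cη := by
    have h := (adj.homEquiv C E).apply_symm_apply cη
    rwa [Adjunction.homEquiv_unit] at h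
  let Bf : (↑D : Type u) ⥤ (↑(L.obj P) : Type u) :=
    Functor.uncurry.obj (B' : (↑(L.obj C) : Type u) ⥤ ((↑G : Type u) ⥤ ↑(L.obj P)))
  -- key equality: u ⋙ Bf = unit
  have key1 : (u.toFunctor : (↑P : Type u) ⥤ ↑D) ⋙ Bf = ((adj.unit.app P).toFunctor : (↑P : Type u) ⥤ ↑(L.obj P)) := by
    have : (u.toFunctor : (↑P : Type u) ⥤ ↑D) ⋙ Bf =
        Functor.uncurry.obj (((adj.unit.app C).toFunctor : ↑C ⥤ ↑(L.obj C)) ⋙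
          (B' : (↑(L.obj C) : Type u) ⥤ ((↑G : Type u) ⥤ ↑(L.obj P)))) :=
      comp_uncurry_aux _ _
    rw [this]
    have h2 : ((adj.unit.app C).toFunctor : ↑C ⥤ ↑(L.obj C)) ⋙
        (B' : (↑(L.obj C) : Type u) ⥤ ((↑G : Type u) ⥤ ↑(L.obj P))) =
        Functor.curry.obj ((adj.unit.app P).toFunctor : (↑C × (↑G : Type u)) ⥤ ↑(L.obj P)) := congrArg Cat.Hom.toFunctor hB'
    exact (congrArg Functor.uncurry.obj h2).trans (Functor.uncurry_obj_curry_obj _)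
  -- unit iso: F ≫ Bf = 𝟙
  have h1 : F ≫ (Bf : D ⟶ L.obj P) = 𝟙 (L.obj P) := by
    apply (adj.homEquiv P (L.obj P)).injective
    rw [Adjunction.homEquiv_unit, Adjunction.homEquiv_unit, CategoryTheory.Functor.map_comp, ← Category.assoc,
      hF, CategoryTheory.Functor.map_id]
    exact Cat.Hom.ext (key1.trans (Functor.comp_id _).symm)
  -- counit iso: Bf ≫ F = 𝟙
  let E2 : Grpd.{u, u} := Grpd.of ((↑G : Type u) ⥤ (↑D : Type u))
  have hc : Functor.curry.obj (Bf ⋙ (F : (↑(L.obj P) : Type u) ⥤ ↑D)) =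
      Functor.curry.obj (𝟭 ((↑(L.obj C) : Type u) × ↑G)) := by
    have := (adj.homEquiv C E2).injective (a₁ := Functor.curry.obj (Bf ⋙ (F : (↑(L.obj P) : Type u) ⥤ ↑D)))
      (a₂ := Functor.curry.obj (𝟭 ((↑(L.obj C) : Type u) × ↑G)))
    apply this
    erw [Adjunction.homEquiv_unit, Adjunction.homEquiv_unit]
    apply Cat.Hom.ext
    show ((adj.unit.app C).toFunctor : ↑C ⥤ ↑(L.obj C)) ⋙ Functor.curry.obj (Bf ⋙ (F : (↑(L.obj P) : Type u) ⥤ ↑D))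
      = ((adj.unit.app C).toFunctor : ↑C ⥤ ↑(L.obj C)) ⋙ Functor.curry.obj (𝟭 ((↑(L.obj C) : Type u) × ↑G))
    erw [comp_curry_aux, comp_curry_aux]
    congr 1
    change ((u.toFunctor : (↑P : Type u) ⥤ ↑D) ⋙ Bf) ⋙ (F : (↑(L.obj P) : Type u) ⥤ ↑D) = u.toFunctor ⋙ 𝟭 _
    rw [key1, Functor.comp_id]
    exact congrArg Cat.Hom.toFunctor hF
  have h2 : Bf ⋙ (F : (↑(L.obj P) : Type u) ⥤ ↑D) = 𝟭 ((↑(L.obj C) : Type u) × ↑G) :=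
    Functor.curry_obj_injective hc
  exact ⟨CategoryTheory.Equivalence.mk (F : (↑(L.obj P) : Type u) ⥤ ↑D) Bf
    (eqToIso (show (F : (↑(L.obj P) : Type u) ⥤ ↑D) ⋙ Bf = 𝟭 _ from h1)).symm
    (eqToIso h2)⟩
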